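/- For every γ > 0, s ∈ (0,1), K > 0, R > 0 and dimensions p, q ≥ 1 there exist λ₀ > 0 and K_Z > 0 such that the following holds for every 0 < λ < λ₀. Let S be a p×p complex matrix with ‖S‖ ≤ 1, let Γ₂ be an invertible q×q complex matrix with ‖Γ₂‖ ≤ e^{−γ}, and let (TAₙ), (TBₙ), (TCₙ), (TDₙ) (n ≥ 1) be sequences of complex matrices of sizes p×p, p×q, q×p, q×q respectively with ‖TAₙ − S‖ ≤ K·λ^s, ‖TBₙ‖ ≤ K·λ^s, ‖TCₙ‖ ≤ K·λ^s and ‖TDₙ − Γ₂⁻¹‖ ≤ K·λ^s for all n. Then for every p×q matrix Z₀ with ‖Z₀‖ ≤ R, the recursion Zₙ = (TAₙ·Z_{n−1} + TBₙ)·(TCₙ·Z_{n−1} + TDₙ)⁻¹ is well defined for all n ≥ 1 (i.e. each matrix TCₙ·Z_{n−1} + TDₙ is invertible), and ‖Zₙ‖ ≤ K_Z·(e^{−γ·n/2} + λ^s) for all n ≥ 1. -/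

import Mathlib

open Matrix
open scoped Matrix.Norms.L2Operator

set_option maxHeartbeats 2000000 in
/-- Uniform smallness of the `Z`-part of the Markov process: the recursion
`Zₙ = (TAₙ Z_{n-1} + TBₙ)(TCₙ Z_{n-1} + TDₙ)⁻¹` is well defined and
`‖Zₙ‖ ≤ K_Z (e^{-γ n/2} + λ^s)`.  The norm is the `L²`-operator norm. -/
theorem stmt_2 (γ s K R : ℝ) (hγ : 0 < γ) (hs0 : 0 < s) (hs1 : s < 1)
    (hK : 0 < K) (hR : 0 < R) (p q : ℕ) (hp : 1 ≤ p) (hq : 1 ≤ q) :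
    ∃ l₀ > 0, ∃ KZ > 0, ∀ l : ℝ, 0 < l → l < l₀ →
      ∀ (S : Matrix (Fin p) (Fin p) ℂ), ‖S‖ ≤ 1 →
      ∀ (Γ₂ : Matrix (Fin q) (Fin q) ℂ), IsUnit Γ₂ → ‖Γ₂‖ ≤ Real.exp (-γ) →
      ∀ (TA : ℕ → Matrix (Fin p) (Fin p) ℂ) (TB : ℕ → Matrix (Fin p) (Fin q) ℂ)
        (TC : ℕ → Matrix (Fin q) (Fin p) ℂ) (TD : ℕ → Matrix (Fin q) (Fin q) ℂ),
      (∀ n, 1 ≤ n → ‖TA n - S‖ ≤ K * l ^ s) →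
      (∀ n, 1 ≤ n → ‖TB n‖ ≤ K * l ^ s) →
      (∀ n, 1 ≤ n → ‖TC n‖ ≤ K * l ^ s) →
      (∀ n, 1 ≤ n → ‖TD n - Γ₂⁻¹‖ ≤ K * l ^ s) →
      ∀ (Z : ℕ → Matrix (Fin p) (Fin q) ℂ), ‖Z 0‖ ≤ R →
      (∀ n, 1 ≤ n →
        Z n = (TA n * Z (n - 1) + TB n) * (TC n * Z (n - 1) + TD n)⁻¹) →
      ∀ n, 1 ≤ n →
        IsUnit (TC n * Z (n - 1) + TD n) ∧
        ‖Z n‖ ≤ KZ * (Real.exp (-γ * n / 2) + l ^ s) := by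
  haveI : Nonempty (Fin q) := ⟨⟨0, by omega⟩⟩
  haveI : Nonempty (Fin p) := ⟨⟨0, by omega⟩⟩
  obtain ⟨g, hgdef⟩ : ∃ x : ℝ, x = Real.exp (-γ) := ⟨_, rfl⟩
  obtain ⟨h, hhdef⟩ : ∃ x : ℝ, x = Real.exp (-(γ/2)) := ⟨_, rfl⟩
  have hg0 : 0 < g := hgdef ▸ Real.exp_pos _
  have hh0 : 0 < h := hhdef ▸ Real.exp_pos _
  have hh1 : h < 1 := by
    rw [hhdef, ← Real.exp_zero]
    exact Real.exp_lt_exp.mpr (by linarith)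
  have hgh : g < h := by
    rw [hgdef, hhdef]; exact Real.exp_lt_exp.mpr (by linarith)
  have hg1 : g ≤ 1 := by linarith
  have h1h : 0 < 1 - h := by linarith
  obtain ⟨δ, hδdef⟩ : ∃ x : ℝ, x = min (1/2) ((h - g)/(h + g)) := ⟨_, rfl⟩
  have hδ0 : 0 < δ := hδdef ▸ lt_min (by norm_num) (div_pos (by linarith) (by linarith))
  have hδhalf : δ ≤ 1/2 := hδdef ▸ min_le_left _ _
  have hkey : (1 + δ) * g ≤ (1 - δ) * h := by
    have h1 : δ ≤ (h - g)/(h + g) := hδdef ▸ min_le_right _ _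
    have h2 : δ * (h + g) ≤ h - g := (le_div_iff₀ (by linarith)).mp h1
    nlinarith
  obtain ⟨M, hMdef⟩ : ∃ x : ℝ, x = R + 2*K/(1-h) := ⟨_, rfl⟩
  have hM0 : 0 < M := by rw [hMdef]; positivity
  obtain ⟨c, hcdef⟩ : ∃ x : ℝ, x = δ/(K*(M+1)) := ⟨_, rfl⟩
  have hc0 : 0 < c := by rw [hcdef]; exact div_pos hδ0 (by positivity)
  refine ⟨min 1 (c ^ s⁻¹), lt_min one_pos (Real.rpow_pos_of_pos hc0 _),
    max R (2*K/(1-h)), lt_max_of_lt_left hR, ?_⟩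
  intro l hl hll₀ S hS Γ₂ hΓu hΓn TA TB TC TD hTA hTB hTC hTD Z hZ0 hZrec
  rw [← hgdef] at hΓn
  have hls0 : 0 < l ^ s := Real.rpow_pos_of_pos hl _
  have hls1 : l ^ s ≤ 1 :=
    Real.rpow_le_one hl.le (le_trans hll₀.le (min_le_left _ _)) hs0.le
  have hlsc : l ^ s ≤ c := by
    have hlc : l ≤ c ^ s⁻¹ := le_of_lt (lt_of_lt_of_le hll₀ (min_le_right _ _))
    calc l ^ s ≤ (c ^ s⁻¹) ^ s := Real.rpow_le_rpow hl.le hlc hs0.le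
    _ = c := Real.rpow_inv_rpow hc0.le hs0.ne'

  have hKlsδ : K * l ^ s * (M + 1) ≤ δ := by
    have h1 : l ^ s ≤ δ / (K * (M+1)) := hcdef ▸ hlsc
    rw [le_div_iff₀ (by positivity)] at h1
    nlinarith
  have hKls : K * l ^ s ≤ δ := by nlinarith
  have hKls0 : 0 < K * l ^ s := by positivity
  -- facts about Γ₂
  have hΓdet : IsUnit Γ₂.det := (Matrix.isUnit_iff_isUnit_det _).mp hΓu
  have hΓmul : Γ₂ * Γ₂⁻¹ = 1 := Matrix.mul_nonsing_inv _ hΓdet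
  have hΓmul' : Γ₂⁻¹ * Γ₂ = 1 := Matrix.nonsing_inv_mul _ hΓdet
  have hΓinvu : IsUnit (Γ₂⁻¹) := ⟨⟨Γ₂⁻¹, Γ₂, hΓmul', hΓmul⟩, rfl⟩
  have hΓ0 : (0:ℝ) ≤ ‖Γ₂‖ := norm_nonneg _
  -- the main induction
  have main : ∀ n : ℕ, ‖Z n‖ ≤ h ^ n * R + 2*K*l^s/(1-h) ∧
      (1 ≤ n → IsUnit (TC n * Z (n-1) + TD n)) := by
    intro n
    induction n with
    | zero =>
      constructor
      · have h0 : (0:ℝ) ≤ 2*K*l^s/(1-h) := by positivity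
        simpa using le_trans hZ0 (by linarith)
      · omega
    | succ n ih =>
      have hW : ‖Z n‖ ≤ h ^ n * R + 2*K*l^s/(1-h) := ih.1
      have hWM : ‖Z n‖ ≤ M := by
        have hpow : h ^ n ≤ 1 := pow_le_one₀ hh0.le hh1.le
        have h2 : 2*K*l^s/(1-h) ≤ 2*K/(1-h) :=
          (div_le_div_iff_of_pos_right h1h).mpr (by nlinarith)
        have h3 : h ^ n * R ≤ 1 * R := mul_le_mul_of_nonneg_right hpow hR.le
        rw [hMdef]
        linarith
      have hW0 : (0:ℝ) ≤ ‖Z n‖ := norm_nonneg _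
      set W := Z n with hWdef
      have hn1 : 1 ≤ n + 1 := by omega
      set E : Matrix (Fin q) (Fin q) ℂ := Γ₂ * (TC (n+1) * W + TD (n+1)) - 1 with hEdef
      have hEeq : E = Γ₂ * (TC (n+1) * W + (TD (n+1) - Γ₂⁻¹)) := by
        rw [hEdef, mul_add, mul_add, mul_sub, hΓmul]
        abel
      have hEn : ‖E‖ ≤ δ := by
        rw [hEeq]
        have h1 : ‖Γ₂ * (TC (n+1) * W + (TD (n+1) - Γ₂⁻¹))‖ ≤
            ‖Γ₂‖ * ‖TC (n+1) * W + (TD (n+1) - Γ₂⁻¹)‖ := Matrix.l2_opNorm_mul _ _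
        have h2 : ‖TC (n+1) * W + (TD (n+1) - Γ₂⁻¹)‖ ≤
            ‖TC (n+1) * W‖ + ‖TD (n+1) - Γ₂⁻¹‖ := norm_add_le _ _
        have h3 : ‖TC (n+1) * W‖ ≤ ‖TC (n+1)‖ * ‖W‖ := Matrix.l2_opNorm_mul _ _
        have h4 : ‖TC (n+1)‖ ≤ K * l ^ s := hTC _ hn1
        have h5 : ‖TD (n+1) - Γ₂⁻¹‖ ≤ K * l ^ s := hTD _ hn1
        have h6 : ‖Γ₂‖ ≤ g := hΓn
        have hC0 : (0:ℝ) ≤ ‖TC (n+1)‖ := norm_nonneg _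
        have hD0 : (0:ℝ) ≤ ‖TD (n+1) - Γ₂⁻¹‖ := norm_nonneg _
        have hCW0 : (0:ℝ) ≤ ‖TC (n+1) * W‖ := norm_nonneg _
        have h8 : ‖TC (n+1) * W‖ ≤ K * l ^ s * M :=
          le_trans h3 (mul_le_mul h4 hWM hW0 hKls0.le)
        have h9 : ‖TC (n+1) * W + (TD (n+1) - Γ₂⁻¹)‖ ≤ K * l ^ s * M + K * l ^ s :=
          le_trans h2 (add_le_add h8 h5)
        have h10 := le_trans h1
          (mul_le_mul (h6.trans hg1) h9 (norm_nonneg _) (by norm_num))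
        nlinarith
      have hE1 : ‖E‖ < 1 := lt_of_le_of_lt hEn (by linarith)
      have hU : IsUnit ((1:Matrix (Fin q) (Fin q) ℂ) + E) := by
        have hE1' : ‖-E‖ < 1 := by rwa [norm_neg]
        have := isUnit_one_sub_of_norm_lt_one hE1'
        simpa [sub_neg_eq_add] using this
      have hUdet : IsUnit ((1:Matrix (Fin q) (Fin q) ℂ) + E).det :=
        (Matrix.isUnit_iff_isUnit_det _).mp hU
      set D' : Matrix (Fin q) (Fin q) ℂ := TC (n+1) * W + TD (n+1) with hD'def
      have hfact : D' = Γ₂⁻¹ * (1 + E) := by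
        rw [hEdef, add_sub_cancel, ← mul_assoc, hΓmul', one_mul]
      have hD'u : IsUnit D' := by rw [hfact]; exact hΓinvu.mul hU
      refine ⟨?_, fun _ => by simpa using hD'u⟩
      -- the inverse and its norm
      set V : Matrix (Fin q) (Fin q) ℂ := ((1:Matrix (Fin q) (Fin q) ℂ) + E)⁻¹ with hVdef
      have hUV : (1 + E) * V = 1 := Matrix.mul_nonsing_inv _ hUdet
      have hVid : V = 1 - E * V := by
        have h0 : V + E * V = 1 := by
          rw [← hUV, add_mul, one_mul]
        exact eq_sub_iff_add_eq.mpr h0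
      have hVn : ‖V‖ * (1 - δ) ≤ 1 := by
        have h1 : ‖V‖ ≤ ‖(1:Matrix (Fin q) (Fin q) ℂ)‖ + ‖E * V‖ := by
          calc ‖V‖ = ‖(1:Matrix (Fin q) (Fin q) ℂ) - E * V‖ := by rw [← hVid]
          _ ≤ _ := norm_sub_le _ _
        have h2 : ‖E * V‖ ≤ ‖E‖ * ‖V‖ := Matrix.l2_opNorm_mul _ _
        have h3 : ‖(1:Matrix (Fin q) (Fin q) ℂ)‖ = 1 := norm_one
        have hV0 : (0:ℝ) ≤ ‖V‖ := norm_nonneg _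
        nlinarith
      have hV0 : (0:ℝ) ≤ ‖V‖ := norm_nonneg _
      have hDinv : D'⁻¹ = V * Γ₂ := by
        rw [hfact, Matrix.mul_inv_rev, Matrix.nonsing_inv_nonsing_inv _ hΓdet]
      have hDinvn : ‖D'⁻¹‖ ≤ ‖V‖ * g := by
        rw [hDinv]
        calc ‖V * Γ₂‖ ≤ ‖V‖ * ‖Γ₂‖ := Matrix.l2_opNorm_mul _ _
        _ ≤ ‖V‖ * g := mul_le_mul_of_nonneg_left hΓn hV0
      -- the recursion step
      have hZeq : Z (n+1) = (TA (n+1) * W + TB (n+1)) * D'⁻¹ := by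
        have := hZrec (n+1) hn1
        simpa using this
      have hAn : ‖TA (n+1)‖ ≤ 1 + K * l ^ s := by
        calc ‖TA (n+1)‖ = ‖TA (n+1) - S + S‖ := by rw [sub_add_cancel]
        _ ≤ ‖TA (n+1) - S‖ + ‖S‖ := norm_add_le _ _
        _ ≤ K * l ^ s + 1 := add_le_add (hTA _ hn1) hS
        _ = 1 + K * l ^ s := by ring
      have hBn : ‖TB (n+1)‖ ≤ K * l ^ s := hTB _ hn1
      have hstep : ‖Z (n+1)‖ ≤ ((1 + K * l ^ s) * ‖W‖ + K * l ^ s) * (‖V‖ * g) := by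
        rw [hZeq]
        have h1 : ‖(TA (n+1) * W + TB (n+1)) * D'⁻¹‖ ≤
            ‖TA (n+1) * W + TB (n+1)‖ * ‖D'⁻¹‖ := Matrix.l2_opNorm_mul _ _
        have h2 : ‖TA (n+1) * W + TB (n+1)‖ ≤ ‖TA (n+1)‖ * ‖W‖ + ‖TB (n+1)‖ :=
          le_trans (norm_add_le _ _) (add_le_add (Matrix.l2_opNorm_mul _ _) le_rfl)
        have h3 : ‖TA (n+1) * W + TB (n+1)‖ ≤ (1 + K * l ^ s) * ‖W‖ + K * l ^ s := by
          refine le_trans h2 (add_le_add ?_ hBn)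
          exact mul_le_mul_of_nonneg_right hAn hW0
        have h4 : (0:ℝ) ≤ ‖TA (n+1) * W + TB (n+1)‖ := norm_nonneg _
        have h5 : (0:ℝ) ≤ (1 + K * l ^ s) * ‖W‖ + K * l ^ s := by positivity
        calc ‖(TA (n+1) * W + TB (n+1)) * D'⁻¹‖
            ≤ ‖TA (n+1) * W + TB (n+1)‖ * ‖D'⁻¹‖ := h1
        _ ≤ ((1 + K * l ^ s) * ‖W‖ + K * l ^ s) * (‖V‖ * g) := by
            apply mul_le_mul h3 hDinvn (norm_nonneg _) h5
      -- numeric estimate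
      have hvg : ‖V‖ * g * (1 + δ) ≤ h := by
        have p1 : ‖V‖ * ((1 + δ) * g) ≤ ‖V‖ * ((1 - δ) * h) :=
          mul_le_mul_of_nonneg_left hkey hV0
        have p2 : (‖V‖ * (1 - δ)) * h ≤ 1 * h :=
          mul_le_mul_of_nonneg_right hVn hh0.le
        nlinarith
      have hvg1 : ‖V‖ * g ≤ 1 := by
        nlinarith [mul_nonneg (mul_nonneg hV0 hg0.le) hδ0.le]
      have hnum : ((1 + K * l ^ s) * ‖W‖ + K * l ^ s) * (‖V‖ * g) ≤
          h * ‖W‖ + 2 * (K * l ^ s) := by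
        have hA : (1 + K * l ^ s) * (‖V‖ * g) ≤ h := by
          nlinarith [mul_le_mul_of_nonneg_right hKls (mul_nonneg hV0 hg0.le)]
        nlinarith [mul_le_mul_of_nonneg_right hA hW0,
          mul_le_mul_of_nonneg_left hvg1 hKls0.le]
      have hfin : h * ‖W‖ + 2 * (K * l ^ s) ≤ h ^ (n+1) * R + 2*K*l^s/(1-h) := by
        have h1 : h * ‖W‖ ≤ h * (h ^ n * R + 2*K*l^s/(1-h)) :=
          mul_le_mul_of_nonneg_left hW hh0.le
        have h2 : h * (h ^ n * R + 2*K*l^s/(1-h)) + 2 * (K * l ^ s) =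
            h ^ (n+1) * R + 2*K*l^s/(1-h) := by
          field_simp
          ring
        linarith
      exact le_trans hstep (le_trans hnum hfin)
  -- conclude
  intro n hn
  refine ⟨(main n).2 hn, ?_⟩
  have h1 : ‖Z n‖ ≤ h ^ n * R + 2*K*l^s/(1-h) := (main n).1
  have hhn : h ^ n = Real.exp (-γ * n / 2) := by
    rw [hhdef, ← Real.exp_nat_mul]
    congr 1
    push_cast
    ring
  have hRle : R ≤ max R (2*K/(1-h)) := le_max_left _ _
  have hKle : 2*K/(1-h) ≤ max R (2*K/(1-h)) := le_max_right _ _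
  have hpow0 : (0:ℝ) ≤ h ^ n := by positivity
  have h2 : h ^ n * R ≤ max R (2*K/(1-h)) * h ^ n := by nlinarith
  have h3 : 2*K*l^s/(1-h) ≤ max R (2*K/(1-h)) * l ^ s := by
    have : 2*K*l^s/(1-h) = (2*K/(1-h)) * l ^ s := by ring
    rw [this]
    exact mul_le_mul_of_nonneg_right hKle hls0.le
  rw [← hhn]
  calc ‖Z n‖ ≤ h ^ n * R + 2*K*l^s/(1-h) := h1
  _ ≤ max R (2*K/(1-h)) * h ^ n + max R (2*K/(1-h)) * l ^ s := add_le_add h2 h3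
  _ = max R (2*K/(1-h)) * (h ^ n + l ^ s) := by ring
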